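/- Let w be a weight structure with zero heart on a triangulated category C. Then weight decompositions are unique up to isomorphism: for any object M, any two weight decomposition triangles of M are isomorphic. Conversely, if all weight decomposition triangles of each object are determined up to isomorphism, then the heart of w is zero. -/

import Mathlib

open CategoryTheory CategoryTheory.Limits CategoryTheory.Pretriangulated ZeroObject

universe w' v u

variable (C : Type u) [Category.{v} C] [HasZeroObject C] [HasShift C ℤ]
  [Preadditive C] [∀ n : ℤ, (shiftFunctor C n).Additive] [Pretriangulated C]

/-- A t-structure `t = (C_{t≤0}, C_{t≥0})` on a triangulated category, in the homological
convention of the paper.  `le` is the class `C_{t≤0}` and `ge` is the class `C_{t≥0}`.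
The condition `C_{t≤0} ⊆ C_{t≤0}[1]` is encoded as `le X → le (X⟦-1⟧)` (the classes being
closed under isomorphism), and `C_{t≥0}[1] ⊆ C_{t≥0}` as `ge X → ge (X⟦1⟧)`.
The class `C_{t≤i} = C_{t≤0}[i]` is `fun X => le (X⟦-i⟧)` and similarly for `C_{t≥i}`. -/
structure PaperTStructure where
  /-- the class `C_{t≤0}` -/
  le : C → Prop
  /-- the class `C_{t≥0}` -/
  ge : C → Prop
  le_iso : ∀ {X Y : C}, (X ≅ Y) → le X → le Y
  ge_iso : ∀ {X Y : C}, (X ≅ Y) → ge X → ge Y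
  le_shift : ∀ X : C, le X → le (X⟦(-1 : ℤ)⟧)
  ge_shift : ∀ X : C, ge X → ge (X⟦(1 : ℤ)⟧)
  /-- `C_{t≥0}[1] ⊥ C_{t≤0}` -/
  orth : ∀ (X Y : C), ge X → le Y → ∀ f : X⟦(1 : ℤ)⟧ ⟶ Y, f = 0
  /-- every object `M` admits a `t`-decomposition `L → M → R → L[1]` with `L ∈ C_{t≥0}`,
  `R ∈ C_{t≤0}[-1]` (i.e. `R⟦1⟧ ∈ C_{t≤0}`) -/
  decomp : ∀ M : C, ∃ (L R : C) (f : L ⟶ M) (g : M ⟶ R) (h : R ⟶ L⟦(1 : ℤ)⟧),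
    (Triangle.mk f g h ∈ distTriang C) ∧ ge L ∧ le (R⟦(1 : ℤ)⟧)

/-- A weight structure `w = (C_{w≤0}, C_{w≥0})` on a triangulated category, in the homological
convention of the paper.  `le` is the class `C_{w≤0}` and `ge` is the class `C_{w≥0}`;
both are retraction-closed.  `C_{w≤i} = C_{w≤0}[i]` is `fun X => le (X⟦-i⟧)`, similarly `ge`. -/
structure PaperWeightStructure where
  /-- the class `C_{w≤0}` -/
  le : C → Prop
  /-- the class `C_{w≥0}` -/
  ge : C → Prop
  le_retract : ∀ (X Y : C), le Y → (∃ (i : X ⟶ Y) (r : Y ⟶ X), i ≫ r = 𝟙 X) → le X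
  ge_retract : ∀ (X Y : C), ge Y → (∃ (i : X ⟶ Y) (r : Y ⟶ X), i ≫ r = 𝟙 X) → ge X
  le_shift : ∀ X : C, le X → le (X⟦(-1 : ℤ)⟧)
  ge_shift : ∀ X : C, ge X → ge (X⟦(1 : ℤ)⟧)
  /-- `C_{w≤0} ⊥ C_{w≥0}[1]` -/
  orth : ∀ (X Y : C), le X → ge Y → ∀ f : X ⟶ Y⟦(1 : ℤ)⟧, f = 0
  /-- every object `M` admits a weight decomposition `L → M → R → L[1]` with `L ∈ C_{w≤0}`,
  `R ∈ C_{w≥0}[1]` (i.e. `R⟦-1⟧ ∈ C_{w≥0}`) -/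
  decomp : ∀ M : C, ∃ (L R : C) (f : L ⟶ M) (g : M ⟶ R) (h : R ⟶ L⟦(1 : ℤ)⟧),
    (Triangle.mk f g h ∈ distTriang C) ∧ le L ∧ ge (R⟦(-1 : ℤ)⟧)

/-- A class of objects is extension-closed if it contains `0` and for every distinguished
triangle `X → Y → Z → X[1]` with `X, Z` in the class, `Y` lies in the class. -/
def ExtClosed (P : C → Prop) : Prop :=
  P (0 : C) ∧ ∀ T : Triangle C, (T ∈ distTriang C) → P T.obj₁ → P T.obj₃ → P T.obj₂

/-- A class of objects is retraction-closed if it contains all retracts of its elements. -/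
def RetractClosed (P : C → Prop) : Prop :=
  ∀ X Y : C, P Y → (∃ (i : X ⟶ Y) (r : Y ⟶ X), i ≫ r = 𝟙 X) → P X

/-- `L → M → R → L[1]` is a weight decomposition of `M`:
distinguished, `L ∈ C_{w≤0}`, `R ∈ C_{w≥0}[1]`. -/
def IsWeightDecomp (w : PaperWeightStructure C) (M L R : C)
    (f : L ⟶ M) (g : M ⟶ R) (h : R ⟶ L⟦(1 : ℤ)⟧) : Prop :=
  (Triangle.mk f g h ∈ distTriang C) ∧ w.le L ∧ w.ge (R⟦(-1 : ℤ)⟧)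


section Aux

variable {C}
variable (w : PaperWeightStructure C)

lemma aux_le_of_iso {X Y : C} (e : X ≅ Y) (h : w.le X) : w.le Y :=
  w.le_retract Y X h ⟨e.inv, e.hom, e.inv_hom_id⟩

lemma aux_ge_of_iso {X Y : C} (e : X ≅ Y) (h : w.ge X) : w.ge Y :=
  w.ge_retract Y X h ⟨e.inv, e.hom, e.inv_hom_id⟩

lemma aux_orth' {X Y : C} (hX : w.le X) (hY : w.ge (Y⟦(-1 : ℤ)⟧)) (f : X ⟶ Y) : f = 0 := by
  have e : ((Y⟦(-1 : ℤ)⟧)⟦(1 : ℤ)⟧) ≅ Y := (shiftEquiv C (1 : ℤ)).counitIso.app Y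
  have h0 : f ≫ e.inv = 0 := w.orth X (Y⟦(-1 : ℤ)⟧) hX hY _
  calc f = (f ≫ e.inv) ≫ e.hom := by simp
  _ = 0 := by rw [h0, zero_comp]

lemma aux_ext_le {T : Triangle C} (hT : T ∈ distTriang C)
    (h₁ : w.le T.obj₁) (h₃ : w.le T.obj₃) : w.le T.obj₂ := by
  obtain ⟨L, R, a, b, c, hdist, hleL, hgeR⟩ := w.decomp T.obj₂
  have h1 : T.mor₁ ≫ b = 0 := aux_orth' w h₁ hgeR _
  obtain ⟨v, hv⟩ := Triangle.yoneda_exact₂ T hT b h1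
  have hv0 : v = 0 := aux_orth' w h₃ hgeR v
  have hb0 : b = 0 := by rw [hv, hv0, comp_zero]
  obtain ⟨s, hs⟩ := Triangle.coyoneda_exact₂ _ hdist (𝟙 T.obj₂)
    (show 𝟙 T.obj₂ ≫ (Triangle.mk a b c).mor₂ = 0 from (Category.id_comp b).trans hb0)
  exact w.le_retract T.obj₂ L hleL ⟨s, a, hs.symm⟩

lemma aux_hom_zero (hheart : ∀ X : C, w.le X → w.ge X → IsZero X)
    {X Y : C} (hX : w.le X) (hY : w.ge Y) (f : X ⟶ Y) : f = 0 := by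
  obtain ⟨L₁, R₁, a, b, c, hdist, hleL, hgeR⟩ := w.decomp (X⟦(1 : ℤ)⟧)
  have hTsh := Triangle.shift_distinguished _ (rot_of_distTriang _ hdist) (-1)
  have hleH : w.le (R₁⟦(-1 : ℤ)⟧) := by
    refine aux_ext_le w hTsh ?_ ?_
    · exact aux_le_of_iso w ((shiftEquiv C (1 : ℤ)).unitIso.app X) hX
    · exact aux_le_of_iso w ((shiftEquiv C (1 : ℤ)).unitIso.app L₁) hleL
  have hzR : IsZero R₁ :=
    IsZero.of_iso ((shiftFunctor C (1 : ℤ)).map_isZero (hheart _ hleH hgeR))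
      ((shiftEquiv C (1 : ℤ)).counitIso.app R₁).symm
  have hf1 : a ≫ (shiftFunctor C (1 : ℤ)).map f = 0 := w.orth L₁ Y hleL hY _
  obtain ⟨u, hu⟩ := Triangle.yoneda_exact₂ _ hdist ((shiftFunctor C (1 : ℤ)).map f) hf1
  have hu0 : u = 0 := hzR.eq_of_src u 0
  have hf0 : (shiftFunctor C (1 : ℤ)).map f = 0 := by rw [hu, hu0, comp_zero]; rfl
  exact (shiftFunctor C (1 : ℤ)).map_injective (by rw [hf0, Functor.map_zero])

end Aux

/-- the heart of a weight structure `w` is zero if and only if weight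
decompositions are unique up to isomorphism (any two weight decomposition triangles of any
object `M` are isomorphic as triangles). -/
theorem stmt10 (w : PaperWeightStructure C) :
    (∀ X : C, w.le X → w.ge X → IsZero X) ↔
    (∀ (M L R L' R' : C) (f : L ⟶ M) (g : M ⟶ R) (h : R ⟶ L⟦(1 : ℤ)⟧)
      (f' : L' ⟶ M) (g' : M ⟶ R') (h' : R' ⟶ L'⟦(1 : ℤ)⟧),
      IsWeightDecomp C w M L R f g h → IsWeightDecomp C w M L' R' f' g' h' →
      Nonempty (Triangle.mk f g h ≅ Triangle.mk f' g' h')) := by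
  constructor
  · intro hz M L R L' R' f g h f' g' h' hd hd'
    obtain ⟨hdist, hle, hge⟩ := hd
    obtain ⟨hdist', hle', hge'⟩ := hd'
    have hfg' : f ≫ g' = 0 := aux_orth' w hle hge' _
    obtain ⟨a, ha⟩ : ∃ a : L ⟶ L', f = a ≫ f' := Triangle.coyoneda_exact₂ _ hdist' f hfg'
    have hfg : f' ≫ g = 0 := aux_orth' w hle' hge _
    obtain ⟨a', ha'⟩ : ∃ a' : L' ⟶ L, f' = a' ≫ f := Triangle.coyoneda_exact₂ _ hdist f' hfg
    replace ha : f = a ≫ f' := ha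
    replace ha' : f' = a' ≫ f := ha'
    have inv_aux : ∀ (e : L ⟶ L), e ≫ f = 0 → e = 0 := by
      intro e he
      obtain ⟨p, hp⟩ := Triangle.coyoneda_exact₂ _ (inv_rot_of_distTriang _ hdist) e he
      have hp0 : p = 0 := aux_hom_zero w hz hle hge p
      rw [hp, hp0, zero_comp]; rfl
    have inv_aux' : ∀ (e : L' ⟶ L'), e ≫ f' = 0 → e = 0 := by
      intro e he
      obtain ⟨p, hp⟩ := Triangle.coyoneda_exact₂ _ (inv_rot_of_distTriang _ hdist') e he
      have hp0 : p = 0 := aux_hom_zero w hz hle' hge' p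
      rw [hp, hp0, zero_comp]; rfl
    have haa' : a ≫ a' = 𝟙 L := by
      have h0 : (𝟙 L - (a ≫ a' : L ⟶ L)) ≫ f = 0 := by
        rw [Preadditive.sub_comp, Category.id_comp, Category.assoc, ← ha', ← ha, sub_self]
      have := inv_aux _ h0
      rw [sub_eq_zero] at this
      exact this.symm
    have ha'a : a' ≫ a = 𝟙 L' := by
      have h0 : (𝟙 L' - (a' ≫ a : L' ⟶ L')) ≫ f' = 0 := by
        rw [Preadditive.sub_comp, Category.id_comp, Category.assoc, ← ha, ← ha', sub_self]
      have := inv_aux' _ h0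
      rw [sub_eq_zero] at this
      exact this.symm
    have hIa : IsIso a := ⟨a', haa', ha'a⟩
    obtain ⟨cm, hc1, hc2⟩ := complete_distinguished_triangle_morphism _ _ hdist hdist' a (𝟙 M)
      ((Category.comp_id f).trans ha)
    let φ : Triangle.mk f g h ⟶ Triangle.mk f' g' h' :=
      Triangle.homMk _ _ a (𝟙 M) cm ((Category.comp_id f).trans ha) hc1 hc2
    have h1 : IsIso φ.hom₁ := hIa
    have h2 : IsIso φ.hom₂ := inferInstanceAs (IsIso (𝟙 M))
    have h3 : IsIso φ.hom₃ := isIso₃_of_isIso₁₂ φ hdist hdist' h1 h2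
    have : IsIso φ := Triangle.isIso_of_isIsos φ h1 h2 h3
    exact ⟨asIso φ⟩
  · intro hu X hle hge
    have hz0 : IsZero ((0 : C)) := isZero_zero C
    have h1 : IsWeightDecomp C w 0 X (X⟦(1 : ℤ)⟧) 0 0 (-(𝟙 X)⟦(1 : ℤ)⟧') := by
      refine ⟨?_, hle, aux_ge_of_iso w ((shiftEquiv C (1 : ℤ)).unitIso.app X) hge⟩
      exact rot_of_distTriang _ (contractible_distinguished X)
    have h2 : IsWeightDecomp C w 0 0 0 0 0 0 := by
      refine ⟨?_, ?_, ?_⟩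
      · exact isomorphic_distinguished _ (contractible_distinguished (0 : C)) _
          (Triangle.isoMk _ _ (Iso.refl _) (Iso.refl _) (Iso.refl _)
            (hz0.eq_of_src _ _) (hz0.eq_of_src _ _) (hz0.eq_of_src _ _))
      · exact w.le_retract 0 X hle ⟨0, 0, hz0.eq_of_src _ _⟩
      · exact w.ge_retract _ X hge ⟨0, 0,
          ((shiftFunctor C (-1 : ℤ)).map_isZero hz0).eq_of_src _ _⟩
    obtain ⟨e⟩ := hu 0 X (X⟦(1 : ℤ)⟧) 0 0 0 0 (-(𝟙 X)⟦(1 : ℤ)⟧') 0 0 0 h1 h2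
    exact IsZero.of_iso hz0 (Triangle.π₁.mapIso e)
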